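/- DC3 recursion correctness (rank transfer): let T' be the string formed by listing, for sample positions j of T in the order (j mod 3, j div 3), the rank of the 3-prefix of suffix j (ranks over the multiset of 3-prefixes of sample suffixes). Then for any two sample positions a, b of T, suffix a of T is lexicographically smaller than suffix b of T if and only if the corresponding suffix of T' is lexicographically smaller than the suffix of T' corresponding to b. -/

import Mathlib

/-- Lexicographic comparison of the (sentinel-padded, hence infinite) suffixes
starting at positions `i` and `j` of the padded text `T`. -/
def SuffLt {α : Type*} [LinearOrder α] (T : ℕ → α) (i j : ℕ) : Prop :=
  ∃ m : ℕ, (∀ t < m, T (i + t) = T (j + t)) ∧ T (i + m) < T (j + m)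

/-- The `3`-prefix `T[j, j+3)` of suffix `j`. -/
def Pre3 {α : Type*} (T : ℕ → α) (j : ℕ) : List α := [T j, T (j + 1), T (j + 2)]

/-- The rank of the `3`-prefix of sample suffix `j` among the `3`-prefixes of all
sample suffixes (equal prefixes get equal ranks). -/
def Rank3 {α : Type*} [LinearOrder α] (n : ℕ) (T : ℕ → α) (j : ℕ) : ℤ :=
  (((List.range n).filter (fun j' =>
    decide (j' % 3 ≠ 0) &&
      decide (List.Lex (· < ·) (Pre3 T j') (Pre3 T j)))).length : ℤ)

/-- The auxiliary text `T'` of DC3: the renamed sample suffixes with `j % 3 = 1`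
(in text order), a separator smaller than all ranks, then those with `j % 3 = 2`. -/
def DC3Text {α : Type*} [LinearOrder α] (n : ℕ) (T : ℕ → α) : List ℤ :=
  ((List.range n).filter (fun j => j % 3 = 1)).map (Rank3 n T) ++ [-1] ++
    ((List.range n).filter (fun j => j % 3 = 2)).map (Rank3 n T)

/-- The position in `T'` corresponding to sample position `a` of `T`. -/
def DC3Pos (n a : ℕ) : ℕ :=
  if a % 3 = 1 then a / 3 else ((List.range n).filter (fun j => j % 3 = 1)).length + 1 + a / 3

section Aux
open List

lemma lex_nil_right {α} {r : α → α → Prop} {l : List α} : ¬ List.Lex r l [] :=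
  List.not_lex_nil

lemma lex_cons_iff' {α : Type*} [LinearOrder α] {x y : α} {l l' : List α} :
    List.Lex (· < ·) (x :: l) (y :: l') ↔ x < y ∨ (x = y ∧ List.Lex (· < ·) l l') := by
  constructor
  · intro h
    cases h with
    | cons h => exact Or.inr ⟨rfl, h⟩
    | rel h => exact Or.inl h
  · rintro (h | ⟨rfl, h⟩)
    · exact List.Lex.rel h
    · exact List.Lex.cons h

lemma lex3_iff {α : Type*} [LinearOrder α] {x0 x1 x2 y0 y1 y2 : α} :
    List.Lex (· < ·) [x0, x1, x2] [y0, y1, y2] ↔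
      x0 < y0 ∨ x0 = y0 ∧ (x1 < y1 ∨ x1 = y1 ∧ x2 < y2) := by
  rw [lex_cons_iff', lex_cons_iff', lex_cons_iff']
  simp [lex_nil_right]

lemma length_filter_lt {l : List ℕ} {p q : ℕ → Bool} (h : ∀ x ∈ l, p x → q x)
    {x : ℕ} (hx : x ∈ l) (hq : q x) (hp : ¬ p x) :
    (l.filter p).length < (l.filter q).length := by
  induction l with
  | nil => simp at hx
  | cons a l ih =>
    have hmono : (l.filter p).length ≤ (l.filter q).length := by
      rw [← List.countP_eq_length_filter, ← List.countP_eq_length_filter]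
      exact List.countP_mono_left (fun y hy => h y (List.mem_cons_of_mem _ hy))
    rcases List.mem_cons.mp hx with rfl | hx'
    · have hp' : p x = false := by simpa using hp
      simp only [List.filter_cons, hp', hq, if_true, if_false, Bool.false_eq_true]
      simp only [List.length_cons]
      omega
    · have hlt := ih (fun y hy => h y (List.mem_cons_of_mem _ hy)) hx'
      by_cases hpa : p a <;> by_cases hqa : q a
      · simp only [List.filter_cons, hpa, hqa, if_true, List.length_cons]; omega
      · exact absurd (h a (List.mem_cons_self) hpa) hqa
      · simp only [List.filter_cons, hpa, hqa, if_true]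
        simp only [Bool.not_eq_true] at hpa
        simp [hpa, List.length_cons]
        omega
      · simp only [Bool.not_eq_true] at hpa hqa
        simp [List.filter_cons, hpa, hqa]
        omega
end Aux

/-- Order on optional entries: `none` (end of list) is smaller than any entry. -/
def OptLt : Option ℤ → Option ℤ → Prop
  | none, some _ => True
  | some x, some y => x < y
  | _, none => False

@[simp] lemma optLt_some_some {x y : ℤ} : OptLt (some x) (some y) ↔ x < y := Iff.rfl
@[simp] lemma optLt_none_some {y : ℤ} : OptLt none (some y) := trivial
@[simp] lemma optLt_none_right {o : Option ℤ} : ¬ OptLt o none := by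
  cases o <;> exact fun h => h
@[simp] lemma optLt_none_none : ¬ OptLt none none := fun h => h

lemma lex_iff_get (l₁ l₂ : List ℤ) :
    List.Lex (· < ·) l₁ l₂ ↔
      ∃ m : ℕ, (∀ t < m, l₁[t]? = l₂[t]? ∧ (l₁[t]?).isSome) ∧ OptLt l₁[m]? l₂[m]? := by
  induction l₁ generalizing l₂ with
  | nil =>
    cases l₂ with
    | nil => simp [lex_nil_right]
    | cons y l₂ =>
      simp only [List.getElem?_nil]
      constructor
      · intro _
        exact ⟨0, by intro t ht; omega, by simp⟩
      · intro _
        exact List.Lex.nil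
  | cons x l₁ ih =>
    cases l₂ with
    | nil =>
      simp only [List.getElem?_nil]
      constructor
      · intro h; exact absurd h lex_nil_right
      · rintro ⟨m, -, h2⟩; exact absurd h2 optLt_none_right
    | cons y l₂ =>
      rw [lex_cons_iff', ih]
      constructor
      · rintro (h | ⟨rfl, m, h1, h2⟩)
        · exact ⟨0, by intro t ht; omega, by simpa using h⟩
        · refine ⟨m + 1, ?_, by simpa using h2⟩
          intro t ht
          cases t with
          | zero => simp
          | succ t => simpa using h1 t (by omega)
      · rintro ⟨m, h1, h2⟩
        cases m with
        | zero =>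
          left; simpa using h2
        | succ m =>
          have h0 := h1 0 (by omega)
          simp only [List.getElem?_cons_zero, Option.some_inj] at h0
          right
          refine ⟨h0.1, m, ?_, by simpa using h2⟩
          intro t ht
          simpa using h1 (t + 1) (by omega)

section Rank
variable {α : Type*} [LinearOrder α]

lemma rank3_nonneg (n : ℕ) (T : ℕ → α) (j : ℕ) : 0 ≤ Rank3 n T j :=
  Int.natCast_nonneg _

lemma rank3_eq_of_pre3_eq {a b : ℕ} (n : ℕ) (T : ℕ → α) (h : Pre3 T a = Pre3 T b) :
    Rank3 n T a = Rank3 n T b := by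
  unfold Rank3
  rw [h]

lemma rank3_lt_of_lex {n a b : ℕ} (T : ℕ → α) (ha : a < n) (ha3 : a % 3 ≠ 0)
    (h : List.Lex (· < ·) (Pre3 T a) (Pre3 T b)) : Rank3 n T a < Rank3 n T b := by
  unfold Rank3
  rw [Int.ofNat_lt]
  refine length_filter_lt (x := a) ?_ (List.mem_range.mpr ha) ?_ ?_
  · intro x _ hx
    simp only [Bool.and_eq_true, decide_eq_true_eq] at hx ⊢
    exact ⟨hx.1, List.lex_trans (fun h₁ h₂ => lt_trans h₁ h₂) hx.2 h⟩
  · simp only [Bool.and_eq_true, decide_eq_true_eq]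
    exact ⟨ha3, h⟩
  · simp only [Bool.and_eq_true, decide_eq_true_eq, not_and]
    intro _
    exact irrefl_of (List.Lex (· < ·)) (Pre3 T a)

lemma rank3_lt_iff {n a b : ℕ} (T : ℕ → α) (ha : a < n) (hb : b < n)
    (ha3 : a % 3 ≠ 0) (hb3 : b % 3 ≠ 0) :
    Rank3 n T a < Rank3 n T b ↔ List.Lex (· < ·) (Pre3 T a) (Pre3 T b) := by
  constructor
  · intro h
    rcases trichotomous_of (List.Lex ((· < ·) : α → α → Prop)) (Pre3 T a) (Pre3 T b) with h' | h' | h'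
    · exact h'
    · rw [rank3_eq_of_pre3_eq n T h'] at h
      exact absurd h (lt_irrefl _)
    · exact absurd h (not_lt.mpr (le_of_lt (rank3_lt_of_lex T hb hb3 h')))
  · exact rank3_lt_of_lex T ha ha3

lemma rank3_eq_iff {n a b : ℕ} (T : ℕ → α) (ha : a < n) (hb : b < n)
    (ha3 : a % 3 ≠ 0) (hb3 : b % 3 ≠ 0) :
    Rank3 n T a = Rank3 n T b ↔ Pre3 T a = Pre3 T b := by
  constructor
  · intro h
    rcases trichotomous_of (List.Lex ((· < ·) : α → α → Prop)) (Pre3 T a) (Pre3 T b) with h' | h' | h'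
    · exact absurd h (ne_of_lt (rank3_lt_of_lex T ha ha3 h'))
    · exact h'
    · exact absurd h.symm (ne_of_lt (rank3_lt_of_lex T hb hb3 h'))
  · exact rank3_eq_of_pre3_eq n T

end Rank

lemma filter_mod1 (n : ℕ) :
    (List.range n).filter (fun j => j % 3 = 1) =
      (List.range ((n + 1) / 3)).map (fun i => 3 * i + 1) := by
  induction n with
  | zero => rfl
  | succ n ih =>
    rw [List.range_succ, List.filter_append, ih]
    by_cases h : n % 3 = 1
    · have h1 : (n + 1 + 1) / 3 = (n + 1) / 3 + 1 := by omega
      have h2 : 3 * ((n + 1) / 3) + 1 = n := by omega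
      rw [h1, List.range_succ, List.map_append]
      simp [h, h2]
    · have h1 : (n + 1 + 1) / 3 = (n + 1) / 3 := by omega
      rw [h1]
      simp [h]

lemma filter_mod2 (n : ℕ) :
    (List.range n).filter (fun j => j % 3 = 2) =
      (List.range (n / 3)).map (fun i => 3 * i + 2) := by
  induction n with
  | zero => rfl
  | succ n ih =>
    rw [List.range_succ, List.filter_append, ih]
    by_cases h : n % 3 = 2
    · have h1 : (n + 1) / 3 = n / 3 + 1 := by omega
      have h2 : 3 * (n / 3) + 2 = n := by omega
      rw [h1, List.range_succ, List.map_append]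
      simp [h, h2]
    · have h1 : (n + 1) / 3 = n / 3 := by omega
      rw [h1]
      simp [h]

lemma drop_map_range_append (g : ℕ → ℤ) (k c : ℕ) (rest : List ℤ) :
    List.drop k ((List.range (k + c)).map g ++ rest) =
      (List.range c).map (fun i => g (k + i)) ++ rest := by
  rw [List.range_add, List.map_append, List.append_assoc,
    List.drop_left' (by simp), List.map_map]
  rfl

lemma drop_map_range' (g : ℕ → ℤ) (k c : ℕ) :
    List.drop k ((List.range (k + c)).map g) = (List.range c).map fun i => g (k + i) := by
  simpa using drop_map_range_append g k c []

section Suffixes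
variable {α : Type*} [LinearOrder α]

lemma suff_desc1 {n a : ℕ} (T : ℕ → α) (ha : a < n) (ha1 : a % 3 = 1) :
    ∃ tail : List ℤ, (DC3Text n T).drop (DC3Pos n a) =
      (List.range ((n + 1) / 3 - a / 3)).map (fun i => Rank3 n T (a + 3 * i)) ++
        (-1 :: tail) := by
  refine ⟨((List.range n).filter (fun j => j % 3 = 2)).map (Rank3 n T), ?_⟩
  unfold DC3Text DC3Pos
  rw [if_pos ha1, filter_mod1, List.append_assoc, List.map_map]
  set c := (n + 1) / 3 - a / 3 with hc
  have hsplit : (n + 1) / 3 = a / 3 + c := by omega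
  conv_lhs => rw [hsplit]
  rw [drop_map_range_append]
  congr 1
  · refine List.map_congr_left (fun i _ => ?_)
    have : 3 * (a / 3 + i) + 1 = a + 3 * i := by omega
    simp [Function.comp, this]

lemma suff_desc2 {n a : ℕ} (T : ℕ → α) (ha : a < n) (ha2 : a % 3 = 2) :
    (DC3Text n T).drop (DC3Pos n a) =
      (List.range (n / 3 - a / 3)).map (fun i => Rank3 n T (a + 3 * i)) := by
  unfold DC3Text DC3Pos
  rw [if_neg (by omega), filter_mod1, filter_mod2]
  have hL : ((List.range ((n + 1) / 3)).map (fun i => 3 * i + 1)).length + 1 + a / 3 =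
      (((List.range ((n + 1) / 3)).map (fun i => 3 * i + 1)).map (Rank3 n T) ++ [-1]).length
        + a / 3 := by simp
  rw [hL, List.drop_length_add_append, List.map_map]
  set c := n / 3 - a / 3 with hc
  have hsplit : n / 3 = a / 3 + c := by omega
  conv_lhs => rw [hsplit]
  rw [drop_map_range']
  refine List.map_congr_left (fun i _ => ?_)
  have : 3 * (a / 3 + i) + 2 = a + 3 * i := by omega
  simp [Function.comp, this]

end Suffixes

/-- Number of sample positions in the block of `a`, from `a` on. -/
def Cnt (n a : ℕ) : ℕ := if a % 3 = 1 then (n + 1) / 3 - a / 3 else n / 3 - a / 3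

lemma cnt_lt_iff {n a : ℕ} (ha : a < n) (ha3 : a % 3 ≠ 0) (t : ℕ) :
    a + 3 * t < n ↔ t < Cnt n a := by
  unfold Cnt
  split <;> omega

section SuffGet
variable {α : Type*} [LinearOrder α]

lemma suff_get_lt {n a t : ℕ} (T : ℕ → α) (ha : a < n) (ha3 : a % 3 ≠ 0)
    (ht : t < Cnt n a) :
    ((DC3Text n T).drop (DC3Pos n a))[t]? = some (Rank3 n T (a + 3 * t)) := by
  have ha12 : a % 3 = 1 ∨ a % 3 = 2 := by omega
  rcases ha12 with h1 | h2
  · obtain ⟨tail, hd⟩ := suff_desc1 T ha h1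
    rw [hd]
    have ht' : t < (n + 1) / 3 - a / 3 := by simpa [Cnt, h1] using ht
    rw [List.getElem?_append]
    simp [ht', List.getElem?_range ht']
  · rw [suff_desc2 T ha h2]
    have ht' : t < n / 3 - a / 3 := by simpa [Cnt, h2, (by omega : ¬ a % 3 = 1)] using ht
    simp [List.getElem?_range ht']

lemma suff_get_cnt1 {n a : ℕ} (T : ℕ → α) (ha : a < n) (ha1 : a % 3 = 1) :
    ((DC3Text n T).drop (DC3Pos n a))[Cnt n a]? = some (-1) := by
  obtain ⟨tail, hd⟩ := suff_desc1 T ha ha1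
  rw [hd]
  have : Cnt n a = (n + 1) / 3 - a / 3 := by simp [Cnt, ha1]
  rw [this, List.getElem?_append]
  simp

lemma suff_get_cnt2 {n a : ℕ} (T : ℕ → α) (ha : a < n) (ha2 : a % 3 = 2) :
    ((DC3Text n T).drop (DC3Pos n a))[Cnt n a]? = none := by
  rw [suff_desc2 T ha ha2]
  apply List.getElem?_eq_none
  simp only [List.length_map, List.length_range, Cnt, if_neg (by omega : ¬ a % 3 = 1)]
  omega

end SuffGet

section Cross
variable {α : Type*} [LinearOrder α]

lemma cross_strict {n a b : ℕ} (T : ℕ → α)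
    (hpad : ∀ i j : ℕ, n ≤ i → j < n → T i < T j)
    (ha : a < n) (hb : b < n) (ha2 : a % 3 = 2) (hb1 : b % 3 = 1)
    (hc : Cnt n a = Cnt n b) :
    ∃ s, s < Cnt n a ∧ Pre3 T (a + 3 * s) ≠ Pre3 T (b + 3 * s) := by
  have hC : n / 3 - a / 3 = (n + 1) / 3 - b / 3 := by
    have h' := hc
    unfold Cnt at h'
    rwa [if_neg (by omega), if_pos hb1] at h'
  have hCa : Cnt n a = n / 3 - a / 3 := by
    unfold Cnt
    rw [if_neg (by omega)]
  by_cases hn : n % 3 = 2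
  · -- here `b = a + 2`; position `n` lies in `b`'s window, `a`'s stays in text
    have hb' : b = a + 2 := by omega
    set i := n - b with hi
    set s := i / 3 with hs
    refine ⟨s, by omega, ?_⟩
    have h1 : n ≤ b + 3 * s + i % 3 := by omega
    have h2 : a + 3 * s + i % 3 < n := by omega
    have hne : T (b + 3 * s + i % 3) < T (a + 3 * s + i % 3) := hpad _ _ h1 h2
    intro heq
    obtain ⟨e0, e1, e2⟩ : T (a + 3 * s) = T (b + 3 * s) ∧
        T (a + 3 * s + 1) = T (b + 3 * s + 1) ∧ T (a + 3 * s + 2) = T (b + 3 * s + 2) := by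
      simpa [Pre3] using heq
    have hr : i % 3 = 0 ∨ i % 3 = 1 ∨ i % 3 = 2 := by omega
    rcases hr with hr | hr | hr <;> rw [hr] at hne
    · simp only [Nat.add_zero] at hne; rw [e0] at hne; exact lt_irrefl _ hne
    · rw [e1] at hne; exact lt_irrefl _ hne
    · rw [e2] at hne; exact lt_irrefl _ hne
  · -- here `a = b + 1`; position `n` lies in `a`'s window, `b`'s stays in text
    have ha' : a = b + 1 := by omega
    set i := n - a with hi
    set s := i / 3 with hs
    refine ⟨s, by omega, ?_⟩
    have h1 : n ≤ a + 3 * s + i % 3 := by omega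
    have h2 : b + 3 * s + i % 3 < n := by omega
    have hne : T (a + 3 * s + i % 3) < T (b + 3 * s + i % 3) := hpad _ _ h1 h2
    intro heq
    obtain ⟨e0, e1, e2⟩ : T (a + 3 * s) = T (b + 3 * s) ∧
        T (a + 3 * s + 1) = T (b + 3 * s + 1) ∧ T (a + 3 * s + 2) = T (b + 3 * s + 2) := by
      simpa [Pre3] using heq
    have hr : i % 3 = 0 ∨ i % 3 = 1 ∨ i % 3 = 2 := by omega
    rcases hr with hr | hr | hr <;> rw [hr] at hne
    · simp only [Nat.add_zero] at hne; rw [e0] at hne; exact lt_irrefl _ hne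
    · rw [e1] at hne; exact lt_irrefl _ hne
    · rw [e2] at hne; exact lt_irrefl _ hne

end Cross

section TextSide
variable {α : Type*} [LinearOrder α]

lemma pre3_eq_iff {a b : ℕ} (T : ℕ → α) : Pre3 T a = Pre3 T b ↔
    T a = T b ∧ T (a + 1) = T (b + 1) ∧ T (a + 2) = T (b + 2) := by
  simp [Pre3]

lemma suffLt_iff_exD {n a b : ℕ} (T : ℕ → α)
    (hpad : ∀ i j : ℕ, n ≤ i → j < n → T i < T j)
    (hpadEq : ∀ i j : ℕ, n ≤ i → n ≤ j → T i = T j) :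
    SuffLt T a b ↔
      ∃ m : ℕ, (∀ s < m, a + 3 * s < n ∧ b + 3 * s < n ∧
          Pre3 T (a + 3 * s) = Pre3 T (b + 3 * s)) ∧
        ((n ≤ a + 3 * m ∧ b + 3 * m < n) ∨
          (a + 3 * m < n ∧ b + 3 * m < n ∧
            List.Lex (· < ·) (Pre3 T (a + 3 * m)) (Pre3 T (b + 3 * m)))) := by
  classical
  constructor
  · rintro ⟨m, heqc, hlt⟩
    have hPm : ¬(a + 3 * (m / 3) < n ∧ b + 3 * (m / 3) < n ∧
        Pre3 T (a + 3 * (m / 3)) = Pre3 T (b + 3 * (m / 3))) := by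
      rintro ⟨-, -, hp⟩
      rw [pre3_eq_iff] at hp
      obtain ⟨e0, e1, e2⟩ := hp
      have hm : m = 3 * (m / 3) ∨ m = 3 * (m / 3) + 1 ∨ m = 3 * (m / 3) + 2 := by omega
      have hTeq : T (a + m) = T (b + m) := by
        rcases hm with hm | hm | hm
        · rw [show a + m = a + 3 * (m / 3) from by omega,
            show b + m = b + 3 * (m / 3) from by omega]; exact e0
        · rw [show a + m = a + 3 * (m / 3) + 1 from by omega,
            show b + m = b + 3 * (m / 3) + 1 from by omega]; exact e1
        · rw [show a + m = a + 3 * (m / 3) + 2 from by omega,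
            show b + m = b + 3 * (m / 3) + 2 from by omega]; exact e2
      exact absurd hTeq (ne_of_lt hlt)
    have hbad : ∃ s, ¬(a + 3 * s < n ∧ b + 3 * s < n ∧
        Pre3 T (a + 3 * s) = Pre3 T (b + 3 * s)) := ⟨m / 3, hPm⟩
    set t := Nat.find hbad with htdef
    have ht := Nat.find_spec hbad
    have htle : t ≤ m / 3 := Nat.find_le hPm
    have hmin : ∀ s, s < t → a + 3 * s < n ∧ b + 3 * s < n ∧
        Pre3 T (a + 3 * s) = Pre3 T (b + 3 * s) :=
      fun s hs => not_not.mp (Nat.find_min hbad hs)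
    refine ⟨t, fun s hs => hmin s hs, ?_⟩
    by_cases hA : a + 3 * t < n
    · by_cases hB : b + 3 * t < n
      · have hne : Pre3 T (a + 3 * t) ≠ Pre3 T (b + 3 * t) := fun h => ht ⟨hA, hB, h⟩
        right
        refine ⟨hA, hB, ?_⟩
        have hm2 : m ≤ 3 * t + 2 := by
          by_contra hgt
          push_neg at hgt
          apply hne
          rw [pre3_eq_iff]
          refine ⟨heqc (3 * t) (by omega), ?_, ?_⟩
          · have h' := heqc (3 * t + 1) (by omega)
            rwa [← Nat.add_assoc, ← Nat.add_assoc] at h'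
          · have h' := heqc (3 * t + 2) (by omega)
            rwa [← Nat.add_assoc, ← Nat.add_assoc] at h'
        simp only [Pre3]
        rw [lex3_iff]
        have hm3 : m = 3 * t ∨ m = 3 * t + 1 ∨ m = 3 * t + 2 := by omega
        rcases hm3 with hm | hm | hm
        · left
          rw [show a + 3 * t = a + m from by omega, show b + 3 * t = b + m from by omega]
          exact hlt
        · right
          refine ⟨heqc (3 * t) (by omega), Or.inl ?_⟩
          rw [show a + 3 * t + 1 = a + m from by omega,
            show b + 3 * t + 1 = b + m from by omega]
          exact hlt
        · right
          refine ⟨heqc (3 * t) (by omega), Or.inr ⟨?_, ?_⟩⟩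
          · have h' := heqc (3 * t + 1) (by omega)
            rwa [← Nat.add_assoc, ← Nat.add_assoc] at h'
          · rw [show a + 3 * t + 2 = a + m from by omega,
              show b + 3 * t + 2 = b + m from by omega]
            exact hlt
      · exfalso
        have hgt : T (b + 3 * t) < T (a + 3 * t) := hpad _ _ (by omega) hA
        rcases Nat.lt_or_ge (3 * t) m with h | h
        · have h' := heqc (3 * t) h
          rw [h'] at hgt
          exact lt_irrefl _ hgt
        · have h3m : 3 * t = m := by omega
          rw [h3m] at hgt
          exact lt_asymm hlt hgt
    · by_cases hB : b + 3 * t < n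
      · exact Or.inl ⟨by omega, hB⟩
      · exfalso
        have h3m : 3 * t ≤ m := by omega
        have hTeq : T (a + m) = T (b + m) := hpadEq _ _ (by omega) (by omega)
        exact absurd hTeq (ne_of_lt hlt)
  · rintro ⟨t, heq, hcase⟩
    have hchar : ∀ i, i < 3 * t → T (a + i) = T (b + i) := by
      intro i hi
      obtain ⟨-, -, hp⟩ := heq (i / 3) (by omega)
      rw [pre3_eq_iff] at hp
      obtain ⟨e0, e1, e2⟩ := hp
      have hm : i = 3 * (i / 3) ∨ i = 3 * (i / 3) + 1 ∨ i = 3 * (i / 3) + 2 := by omega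
      rcases hm with hm | hm | hm
      · rw [show a + i = a + 3 * (i / 3) from by omega,
          show b + i = b + 3 * (i / 3) from by omega]; exact e0
      · rw [show a + i = a + 3 * (i / 3) + 1 from by omega,
          show b + i = b + 3 * (i / 3) + 1 from by omega]; exact e1
      · rw [show a + i = a + 3 * (i / 3) + 2 from by omega,
          show b + i = b + 3 * (i / 3) + 2 from by omega]; exact e2
    rcases hcase with ⟨hA, hB⟩ | ⟨hA, hB, hlex⟩
    · exact ⟨3 * t, fun i hi => hchar i hi, hpad _ _ hA hB⟩
    · simp only [Pre3] at hlex
      rw [lex3_iff] at hlex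
      rcases hlex with h0 | ⟨e0, h1 | ⟨e1, h2⟩⟩
      · exact ⟨3 * t, fun i hi => hchar i hi, h0⟩
      · refine ⟨3 * t + 1, ?_, ?_⟩
        · intro i hi
          rcases Nat.lt_or_ge i (3 * t) with h | h
          · exact hchar i h
          · have hi' : i = 3 * t := by omega
            rw [hi']; exact e0
        · rw [show a + (3 * t + 1) = a + 3 * t + 1 from by omega,
            show b + (3 * t + 1) = b + 3 * t + 1 from by omega]
          exact h1
      · refine ⟨3 * t + 2, ?_, ?_⟩
        · intro i hi
          rcases Nat.lt_or_ge i (3 * t) with h | h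
          · exact hchar i h
          · have hi' : i = 3 * t ∨ i = 3 * t + 1 := by omega
            rcases hi' with hi' | hi'
            · rw [hi']; exact e0
            · rw [hi', show a + (3 * t + 1) = a + 3 * t + 1 from by omega,
                show b + (3 * t + 1) = b + 3 * t + 1 from by omega]
              exact e1
        · rw [show a + (3 * t + 2) = a + 3 * t + 2 from by omega,
            show b + (3 * t + 2) = b + 3 * t + 2 from by omega]
          exact h2

end TextSide

section Bridge
variable {α : Type*} [LinearOrder α]

lemma cnt_inj {n a b : ℕ} (ha : a < n) (hb : b < n) (ha3 : a % 3 ≠ 0) (hb3 : b % 3 ≠ 0)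
    (hmod : a % 3 = b % 3) (h : Cnt n a = Cnt n b) : a = b := by
  unfold Cnt at h
  by_cases h1 : a % 3 = 1
  · rw [if_pos h1, if_pos (by omega)] at h
    omega
  · rw [if_neg h1, if_neg (by omega)] at h
    omega

lemma lex_suff_iff_exR {n a b : ℕ} (T : ℕ → α)
    (hpad : ∀ i j : ℕ, n ≤ i → j < n → T i < T j)
    (ha : a < n) (hb : b < n) (ha3 : a % 3 ≠ 0) (hb3 : b % 3 ≠ 0) (hab : a ≠ b) :
    List.Lex (· < ·) ((DC3Text n T).drop (DC3Pos n a)) ((DC3Text n T).drop (DC3Pos n b)) ↔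
      ∃ m : ℕ, (∀ s < m, a + 3 * s < n ∧ b + 3 * s < n ∧
          Rank3 n T (a + 3 * s) = Rank3 n T (b + 3 * s)) ∧
        ((n ≤ a + 3 * m ∧ b + 3 * m < n) ∨
          (a + 3 * m < n ∧ b + 3 * m < n ∧
            Rank3 n T (a + 3 * m) < Rank3 n T (b + 3 * m))) := by
  rw [lex_iff_get]
  have hAiff : ∀ t, a + 3 * t < n ↔ t < Cnt n a := cnt_lt_iff ha ha3
  have hBiff : ∀ t, b + 3 * t < n ↔ t < Cnt n b := cnt_lt_iff hb hb3
  have ha12 : a % 3 = 1 ∨ a % 3 = 2 := by omega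
  have hb12 : b % 3 = 1 ∨ b % 3 = 2 := by omega
  set c := min (Cnt n a) (Cnt n b) with hc
  -- pointwise equivalence of the equality conditions strictly below `c`
  have hEQ : ∀ s, s < c →
      ((((DC3Text n T).drop (DC3Pos n a))[s]? = ((DC3Text n T).drop (DC3Pos n b))[s]? ∧
          (((DC3Text n T).drop (DC3Pos n a))[s]?).isSome) ↔
        (a + 3 * s < n ∧ b + 3 * s < n ∧ Rank3 n T (a + 3 * s) = Rank3 n T (b + 3 * s))) := by
    intro s hs
    rw [suff_get_lt T ha ha3 (by omega), suff_get_lt T hb hb3 (by omega)]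
    have h1 : a + 3 * s < n := (hAiff s).mpr (by omega)
    have h2 : b + 3 * s < n := (hBiff s).mpr (by omega)
    simp [h1, h2]
  -- the equality condition fails at `c` (on the `T'` side)
  have hEQgc : ¬ (((DC3Text n T).drop (DC3Pos n a))[c]? = ((DC3Text n T).drop (DC3Pos n b))[c]? ∧
      (((DC3Text n T).drop (DC3Pos n a))[c]?).isSome) := by
    rcases lt_trichotomy (Cnt n a) (Cnt n b) with hlt | heqc | hgt
    · have hceq : c = Cnt n a := min_eq_left hlt.le
      rw [hceq, suff_get_lt T hb hb3 (by omega)]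
      rcases ha12 with a1 | a2
      · rw [suff_get_cnt1 T ha a1]
        rintro ⟨he, -⟩
        rw [Option.some_inj] at he
        have := rank3_nonneg n T (b + 3 * Cnt n a)
        omega
      · rw [suff_get_cnt2 T ha a2]
        rintro ⟨-, hs⟩
        simp at hs
    · have hceq : c = Cnt n a := by omega
      rcases ha12 with a1 | a2
      · rcases hb12 with b1 | b2
        · exact absurd (cnt_inj ha hb ha3 hb3 (by omega) heqc) hab
        · rw [hceq, suff_get_cnt1 T ha a1, show Cnt n a = Cnt n b from heqc,
            suff_get_cnt2 T hb b2]
          rintro ⟨he, -⟩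
          simp at he
      · rw [hceq, suff_get_cnt2 T ha a2]
        rintro ⟨-, hs⟩
        simp at hs
    · have hceq : c = Cnt n b := min_eq_right hgt.le
      rw [hceq, suff_get_lt T ha ha3 (by omega)]
      rcases hb12 with b1 | b2
      · rw [suff_get_cnt1 T hb b1]
        rintro ⟨he, -⟩
        rw [Option.some_inj] at he
        have := rank3_nonneg n T (a + 3 * Cnt n b)
        omega
      · rw [suff_get_cnt2 T hb b2]
        rintro ⟨he, -⟩
        simp at he
  constructor
  · rintro ⟨m, h1, h2⟩
    have hmc : m ≤ c := by
      by_contra h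
      exact hEQgc (h1 c (by omega))
    rcases Nat.lt_or_ge m c with hmlt | hmge
    · refine ⟨m, fun s hs => (hEQ s (by omega)).mp (h1 s hs), Or.inr ?_⟩
      have hA' : a + 3 * m < n := (hAiff m).mpr (by omega)
      have hB' : b + 3 * m < n := (hBiff m).mpr (by omega)
      rw [suff_get_lt T ha ha3 (by omega), suff_get_lt T hb hb3 (by omega)] at h2
      exact ⟨hA', hB', by simpa using h2⟩
    · have hmeq : m = c := by omega
      rw [hmeq] at h1 h2
      refine ⟨c, fun s hs => (hEQ s hs).mp (h1 s hs), ?_⟩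
      rcases lt_trichotomy (Cnt n a) (Cnt n b) with hlt | heqc | hgt
      · left
        have hceq : c = Cnt n a := min_eq_left hlt.le
        constructor
        · have hna : ¬ a + 3 * Cnt n a < n := fun hlt' => by
            have := (hAiff (Cnt n a)).mp hlt'; omega
          omega
        · exact (hBiff c).mpr (by omega)
      · rcases ha12 with a1 | a2
        · rcases hb12 with b1 | b2
          · exact absurd (cnt_inj ha hb ha3 hb3 (by omega) heqc) hab
          · exfalso
            have hceq : c = Cnt n a := by omega
            rw [hceq, suff_get_cnt1 T ha a1, show Cnt n a = Cnt n b from heqc,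
              suff_get_cnt2 T hb b2] at h2
            exact optLt_none_right h2
        · rcases hb12 with b1 | b2
          · exfalso
            obtain ⟨s, hs, hne⟩ := cross_strict T hpad ha hb a2 b1 heqc
            have hsc : s < c := by omega
            have hr := ((hEQ s hsc).mp (h1 s hsc)).2.2
            have hma : (a + 3 * s) % 3 ≠ 0 := by omega
            have hmb : (b + 3 * s) % 3 ≠ 0 := by omega
            have hA' : a + 3 * s < n := (hAiff s).mpr (by omega)
            have hB' : b + 3 * s < n := (hBiff s).mpr (by omega)
            exact hne ((rank3_eq_iff T hA' hB' hma hmb).mp hr)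
          · exact absurd (cnt_inj ha hb ha3 hb3 (by omega) heqc) hab
      · exfalso
        have hceq : c = Cnt n b := min_eq_right hgt.le
        rw [suff_get_lt T ha ha3 (by omega)] at h2
        rcases hb12 with b1 | b2
        · rw [hceq, suff_get_cnt1 T hb b1] at h2
          rw [optLt_some_some] at h2
          have := rank3_nonneg n T (a + 3 * Cnt n b)
          omega
        · rw [hceq, suff_get_cnt2 T hb b2] at h2
          exact optLt_none_right h2
  · rintro ⟨m, h1, h2⟩
    have hmc : m ≤ c := by
      by_contra h
      obtain ⟨hA', hB', -⟩ := h1 c (by omega)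
      have := (hAiff c).mp hA'
      have := (hBiff c).mp hB'
      omega
    rcases Nat.lt_or_ge m c with hmlt | hmge
    · refine ⟨m, fun s hs => (hEQ s (by omega)).mpr (h1 s hs), ?_⟩
      rcases h2 with ⟨hA', hB'⟩ | ⟨hA', hB', hR⟩
      · exfalso
        have := (hAiff m).mpr (by omega)
        omega
      · rw [suff_get_lt T ha ha3 (by omega), suff_get_lt T hb hb3 (by omega)]
        simpa using hR
    · have hmeq : m = c := by omega
      rw [hmeq] at h1 h2
      refine ⟨c, fun s hs => (hEQ s hs).mpr (h1 s hs), ?_⟩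
      rcases lt_trichotomy (Cnt n a) (Cnt n b) with hlt | heqc | hgt
      · have hceq : c = Cnt n a := min_eq_left hlt.le
        rw [suff_get_lt T hb hb3 (by omega)]
        rcases ha12 with a1 | a2
        · rw [hceq, suff_get_cnt1 T ha a1]
          rw [optLt_some_some]
          have := rank3_nonneg n T (b + 3 * Cnt n a)
          omega
        · rw [hceq, suff_get_cnt2 T ha a2]
          exact optLt_none_some
      · exfalso
        have hnA : ¬ a + 3 * c < n := fun h => by
          have := (hAiff c).mp h; omega
        have hnB : ¬ b + 3 * c < n := fun h => by
          have := (hBiff c).mp h; omega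
        rcases h2 with ⟨-, hB'⟩ | ⟨hA', -, -⟩
        · exact hnB hB'
        · exact hnA hA'
      · exfalso
        have hceq : c = Cnt n b := min_eq_right hgt.le
        have hnB : ¬ b + 3 * c < n := fun h => by
          have := (hBiff c).mp h; omega
        rcases h2 with ⟨-, hB'⟩ | ⟨-, hB', -⟩
        · exact hnB hB'
        · exact hnB hB'

end Bridge

section Main
variable {α : Type*} [LinearOrder α]

lemma exD_iff_exR {n a b : ℕ} (T : ℕ → α)
    (ha : a < n) (hb : b < n) (ha3 : a % 3 ≠ 0) (hb3 : b % 3 ≠ 0) :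
    (∃ m : ℕ, (∀ s < m, a + 3 * s < n ∧ b + 3 * s < n ∧
        Pre3 T (a + 3 * s) = Pre3 T (b + 3 * s)) ∧
      ((n ≤ a + 3 * m ∧ b + 3 * m < n) ∨
        (a + 3 * m < n ∧ b + 3 * m < n ∧
          List.Lex (· < ·) (Pre3 T (a + 3 * m)) (Pre3 T (b + 3 * m))))) ↔
    (∃ m : ℕ, (∀ s < m, a + 3 * s < n ∧ b + 3 * s < n ∧
        Rank3 n T (a + 3 * s) = Rank3 n T (b + 3 * s)) ∧
      ((n ≤ a + 3 * m ∧ b + 3 * m < n) ∨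
        (a + 3 * m < n ∧ b + 3 * m < n ∧
          Rank3 n T (a + 3 * m) < Rank3 n T (b + 3 * m)))) := by
  refine exists_congr fun m => and_congr ?_ (or_congr Iff.rfl ?_)
  · refine forall_congr' fun s => imp_congr_right fun hs => ?_
    refine and_congr_right fun h1 => and_congr_right fun h2 => ?_
    exact (rank3_eq_iff T h1 h2 (by omega) (by omega)).symm
  · refine and_congr_right fun h1 => and_congr_right fun h2 => ?_
    exact (rank3_lt_iff T h1 h2 (by omega) (by omega)).symm

end Main

/-- DC3 recursion correctness (rank transfer): for a text `T` of length `n` padded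
with minimal sentinels, and sample positions `a, b` (residue mod 3 in `{1, 2}`),
suffix `a` of `T` is lexicographically smaller than suffix `b` of `T` iff the
suffix of `T'` corresponding to `a` is lexicographically smaller than the suffix
of `T'` corresponding to `b`. -/
theorem dc3_rank_transfer {α : Type*} [LinearOrder α] (n : ℕ) (T : ℕ → α)
    (hpad : ∀ i j : ℕ, n ≤ i → j < n → T i < T j)
    (hpadEq : ∀ i j : ℕ, n ≤ i → n ≤ j → T i = T j) :
    ∀ a b : ℕ, a < n → b < n → a % 3 ≠ 0 → b % 3 ≠ 0 →
      (SuffLt T a b ↔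
        List.Lex (· < ·) ((DC3Text n T).drop (DC3Pos n a))
          ((DC3Text n T).drop (DC3Pos n b))) := by

  intro a b ha hb ha3 hb3
  by_cases hab : a = b
  · subst hab
    constructor
    · rintro ⟨m, -, hlt⟩
      exact absurd hlt (lt_irrefl _)
    · intro h
      exact absurd h (fun h' =>
        _root_.asymm (r := List.Lex ((· < ·) : ℤ → ℤ → Prop)) h' h')
  · rw [suffLt_iff_exD T hpad hpadEq, exD_iff_exR T ha hb ha3 hb3]
    exact (lex_suff_iff_exR T hpad ha hb ha3 hb3 hab).symm
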